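/- If a smoothness condition holds, namely for all w ≥ 0 and w* > 0: w* · f(w + w*) ≤ λ · w* · f(w*) + ε · w · f(w) with ε < 1 and λ > 1 - ε, then for any Nash equilibrium outcome σ and any outcome σ* of the singleton weighted congestion game with social cost C(σ) = Σ_{x} w_x(σ) f(w_x(σ)), we have C(σ) ≤ (λ/(1-ε)) · C(σ*). -/

import Mathlib

open Finset

/-- Load on resource `x` in outcome `σ`: the sum of the weights of players choosing `x`. -/
def load {V A : Type*} [Fintype V] [DecidableEq A]
    (u : V → A → ℝ) (σ : V → A) (x : A) : ℝ :=
  ∑ i, if σ i = x then u i (σ i) else 0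

/-- Social cost `C(σ) = Σ_x w_x(σ) f(w_x(σ))`. -/
def socialCost {V A : Type*} [Fintype V] [Fintype A] [DecidableEq A]
    (u : V → A → ℝ) (f : ℝ → ℝ) (σ : V → A) : ℝ :=
  ∑ x, load u σ x * f (load u σ x)


lemma load_nonneg {V A : Type*} [Fintype V] [DecidableEq A]
    (u : V → A → ℝ) (hu : ∀ i x, 0 < u i x) (σ : V → A) (x : A) :
    0 ≤ load u σ x := by
  refine Finset.sum_nonneg fun i _ => ?_
  split <;> simp [le_of_lt (hu _ _)]

lemma single_le_load {V A : Type*} [Fintype V] [DecidableEq A]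
    (u : V → A → ℝ) (hu : ∀ i x, 0 < u i x) (σ : V → A) (i : V) :
    u i (σ i) ≤ load u σ (σ i) := by
  have := Finset.single_le_sum (f := fun j => if σ j = σ i then u j (σ j) else 0)
    (fun j _ => by split <;> simp [le_of_lt (hu _ _)]) (Finset.mem_univ i)
  simpa [load] using this

lemma group_sum {V A : Type*} [Fintype V] [Fintype A] [DecidableEq A]
    (u : V → A → ℝ) (τ : V → A) (g : A → ℝ) :
    ∑ x, load u τ x * g x = ∑ i, u i (τ i) * g (τ i) := by
  unfold load
  simp_rw [Finset.sum_mul, ite_mul, zero_mul]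
  rw [Finset.sum_comm]
  simp

lemma eps_nonneg {f : ℝ → ℝ}
    (hf_mono : ∀ w₁ w₂ : ℝ, 0 ≤ w₁ → w₁ ≤ w₂ → f w₁ ≤ f w₂)
    {lam ε : ℝ} (hε : ε < 1) (hlam : 1 - ε < lam)
    (smooth : ∀ w ws : ℝ, 0 ≤ w → 0 < ws →
      ws * f (w + ws) ≤ lam * ws * f ws + ε * w * f w)
    {w : ℝ} (hw : 0 ≤ w) : 0 ≤ ε * w * f w := by
  have hlam0 : 0 < lam := lt_trans (by linarith) hlam
  by_contra h
  push_neg at h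
  set D := ε * w * f w with hD
  have key : ∀ t : ℝ, 0 < t → t ≤ 1 → t * (f w - lam * f (w + 1)) ≤ D := by
    intro t ht ht1
    have h1 := smooth w t hw ht
    have h2 : f w ≤ f (w + t) := hf_mono _ _ hw (by linarith)
    have h3 : f t ≤ f (w + 1) := hf_mono _ _ (le_of_lt ht) (by linarith)
    have h4 : t * f w ≤ t * f (w + t) := by nlinarith
    have h5 : lam * t * f t ≤ lam * t * f (w + 1) := by
      have := mul_le_mul_of_nonneg_left h3 (by positivity : (0:ℝ) ≤ lam * t)
      linarith [this]
    nlinarith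
  set c := f w - lam * f (w + 1) with hc
  rcases le_or_gt 0 c with hc0 | hc0
  · have := key 1 one_pos le_rfl
    linarith
  · have hc' : c ≠ 0 := ne_of_lt hc0
    have htpos : 0 < D / (2 * c) := div_pos_iff.mpr (Or.inr ⟨h, by linarith⟩)
    set t := min 1 (D / (2 * c)) with htdef
    have ht : 0 < t := lt_min one_pos htpos
    have hk := key t ht (min_le_left _ _)
    have htle : t ≤ D / (2 * c) := min_le_right _ _
    have h1 : D / (2 * c) * c ≤ t * c := by nlinarith
    have h2 : D / (2 * c) * c = D / 2 := by field_simp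
    clear_value D c t
    linarith

theorem stmt_2 {V A : Type*} [Fintype V] [Fintype A] [DecidableEq A]
    (u : V → A → ℝ) (hu : ∀ i x, 0 < u i x)
    (f : ℝ → ℝ)
    (hf_mono : ∀ w₁ w₂ : ℝ, 0 ≤ w₁ → w₁ ≤ w₂ → f w₁ ≤ f w₂)
    (hf_nonneg : ∀ w : ℝ, 0 ≤ w → 0 ≤ f w)
    (lam ε : ℝ) (hε : ε < 1) (hlam : 1 - ε < lam)
    (smooth : ∀ w ws : ℝ, 0 ≤ w → 0 < ws →
      ws * f (w + ws) ≤ lam * ws * f ws + ε * w * f w)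
    (σ σs : V → A)
    (hNash : ∀ i y, u i (σ i) * f (load u σ (σ i)) ≤ u i y * f (load u σ y + u i y)) :
    socialCost u f σ ≤ (lam / (1 - ε)) * socialCost u f σs := by
  have hε' : 0 < 1 - ε := by linarith
  have hCs : 0 ≤ socialCost u f σs := by
    refine Finset.sum_nonneg fun x _ => mul_nonneg (load_nonneg u hu σs x)
      (hf_nonneg _ (load_nonneg u hu σs x))
  have main : socialCost u f σ ≤ lam * socialCost u f σs + ε * socialCost u f σ := by
    have step1 : socialCost u f σ = ∑ i, u i (σ i) * f (load u σ (σ i)) :=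
      group_sum u σ (fun x => f (load u σ x))
    have step2 : ∑ i, u i (σ i) * f (load u σ (σ i)) ≤
        ∑ i, u i (σs i) * f (load u σ (σs i) + load u σs (σs i)) := by
      refine Finset.sum_le_sum fun i _ => ?_
      calc u i (σ i) * f (load u σ (σ i))
          ≤ u i (σs i) * f (load u σ (σs i) + u i (σs i)) := hNash i (σs i)
        _ ≤ u i (σs i) * f (load u σ (σs i) + load u σs (σs i)) := by
            refine mul_le_mul_of_nonneg_left (hf_mono _ _ ?_ ?_) (hu i _).le
            · have := load_nonneg u hu σ (σs i); linarith [(hu i (σs i)).le]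
            · linarith [single_le_load u hu σs i]
    have step3 : ∑ i, u i (σs i) * f (load u σ (σs i) + load u σs (σs i)) =
        ∑ x, load u σs x * f (load u σ x + load u σs x) :=
      (group_sum u σs (fun x => f (load u σ x + load u σs x))).symm
    have step4 : ∀ x ∈ Finset.univ, load u σs x * f (load u σ x + load u σs x) ≤
        lam * (load u σs x * f (load u σs x)) + ε * (load u σ x * f (load u σ x)) := by
      intro x _
      rcases (load_nonneg u hu σs x).lt_or_eq with hpos | h0
      · calc load u σs x * f (load u σ x + load u σs x)
            ≤ lam * load u σs x * f (load u σs x) + ε * load u σ x * f (load u σ x) :=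
              smooth _ _ (load_nonneg u hu σ x) hpos
          _ = _ := by ring
      · have h1 := eps_nonneg hf_mono hε hlam smooth (load_nonneg u hu σ x)
        rw [← h0]
        simp only [zero_mul, mul_zero, zero_add]
        linarith
    calc socialCost u f σ = ∑ i, u i (σ i) * f (load u σ (σ i)) := step1
      _ ≤ ∑ i, u i (σs i) * f (load u σ (σs i) + load u σs (σs i)) := step2
      _ = ∑ x, load u σs x * f (load u σ x + load u σs x) := step3
      _ ≤ ∑ x, (lam * (load u σs x * f (load u σs x)) + ε * (load u σ x * f (load u σ x))) :=
          Finset.sum_le_sum step4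
      _ = lam * socialCost u f σs + ε * socialCost u f σ := by
          rw [Finset.sum_add_distrib, ← Finset.mul_sum, ← Finset.mul_sum]; rfl
  rw [div_mul_eq_mul_div, le_div_iff₀ hε']
  nlinarith [main]
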